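/- arXiv:1208.1474 — 2 statements merged into one kernel-verified Lean document; each statement's English description precedes it below -/
import Mathlib

section
/- For every solution γ = (x, v) : I → ℝ² × ℝ² of the Euler–Lagrange ODE of the vertical magnetic Lagrangian, the function t ↦ v₂(t) + cos(2π x₁(t)) is constant on the interval I; that is, H(x, v) = v₂ + cos(2π x₁) is a first integral of the flow (in energy–angle coordinates v = √(2E)(cos φ, sin φ) this is the first integral H(x, φ) = cos(2π x) + √(2E) sin φ of the paper). -/
open Real

/-- A solution of the Euler–Lagrange ODE of the vertical magnetic Lagrangian
`L(x,v) = ‖v‖²/2 + cos(2π x₁) v₂`, lifted to `ℝ² × ℝ²`, on a set `I ⊆ ℝ`: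
`x' = v`, `v₁' = −2π sin(2π x₁) v₂`, `v₂' = 2π sin(2π x₁) v₁`. -/
def IsELSolution (I : Set ℝ) (x v : ℝ → ℝ × ℝ) : Prop :=
  ∀ t ∈ I,
    HasDerivWithinAt x (v t) I t ∧
    HasDerivWithinAt (fun s => (v s).1)
      (-(2 * π * Real.sin (2 * π * (x t).1) * (v t).2)) I t ∧
    HasDerivWithinAt (fun s => (v s).2)
      (2 * π * Real.sin (2 * π * (x t).1) * (v t).1) I t

/-- The quantity `H(x,v) = v₂ + cos(2π x₁)` is a first integral: it is constant along
any solution of the Euler–Lagrange ODE of the vertical magnetic Lagrangian on an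
interval `I`. -/
theorem first_integral_constant_along_EL_solutions
    (I : Set ℝ) (hI : I.OrdConnected) (x v : ℝ → ℝ × ℝ)
    (hsol : IsELSolution I x v) :
    ∀ s ∈ I, ∀ t ∈ I,
      (v s).2 + Real.cos (2 * π * (x s).1) = (v t).2 + Real.cos (2 * π * (x t).1) := by
  intro s hs t ht
  set f : ℝ → ℝ := fun u => (v u).2 + Real.cos (2 * π * (x u).1) with hf
  have key : ∀ u ∈ I, HasDerivWithinAt f 0 I u := by
    intro u hu
    obtain ⟨hx, hv1, hv2⟩ := hsol u hu
    have hx1 : HasDerivWithinAt (fun s => (x s).1) (v u).1 I u := by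
      have := (ContinuousLinearMap.fst ℝ ℝ ℝ).hasFDerivAt.comp_hasDerivWithinAt u hx
      simp at this
      exact this
    have hcos : HasDerivWithinAt (fun s => Real.cos (2 * π * (x s).1))
        (-(Real.sin (2 * π * (x u).1)) * (2 * π * (v u).1)) I u := by
      have harg : HasDerivWithinAt (fun s => 2 * π * (x s).1) (2 * π * (v u).1) I u := by
        simpa [mul_assoc] using hx1.const_mul (2 * π)
      exact (Real.hasDerivAt_cos (2 * π * (x u).1)).comp_hasDerivWithinAt u harg
    have := hv2.add hcos
    refine this.congr_deriv ?_
    ring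
  have hconv : Convex ℝ I := hI.convex
  have := hconv.norm_image_sub_le_of_norm_hasDerivWithin_le
    (C := 0) key (fun u hu => by simp) ht hs
  have : f s = f t := by
    have h0 : ‖f s - f t‖ ≤ 0 := by simpa using this
    have := norm_nonneg (f s - f t)
    have : f s - f t = 0 := by
      have := le_antisymm h0 (norm_nonneg _)
      simpa [norm_eq_zero] using this.symm ▸ (norm_eq_zero.mp this.symm.symm)
    linarith [this]
  simpa [hf] using this
end

section
/- Let E > 1/2 and let F ∈ ℝ satisfy |F| < √(2E) − 1, and define Γ⁺ = {(x, v) ∈ ℝ² × ℝ² : ‖v‖² = 2E, v₂ + cos(2π x₁) = F, and v₁ > 0}. Then Γ⁺ is invariant under the Euler–Lagrange ODE of the vertical magnetic Lagrangian: if γ : ℝ → ℝ² × ℝ² is a solution of the ODE with γ(0) ∈ Γ⁺, then γ(t) ∈ Γ⁺ for all t ∈ ℝ. The same holds for the set Γ⁻ defined with v₁ < 0 instead of v₁ > 0. -/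
open Real

/-- `Γ⁺ = {(x,v) : ‖v‖² = 2E, v₂ + cos(2π x₁) = F, v₁ > 0}`. -/
def GammaPlus (E F : ℝ) : Set ((ℝ × ℝ) × (ℝ × ℝ)) :=
  {p | p.2.1 ^ 2 + p.2.2 ^ 2 = 2 * E ∧
    p.2.2 + Real.cos (2 * π * p.1.1) = F ∧ 0 < p.2.1}

/-- `Γ⁻ = {(x,v) : ‖v‖² = 2E, v₂ + cos(2π x₁) = F, v₁ < 0}`. -/
def GammaMinus (E F : ℝ) : Set ((ℝ × ℝ) × (ℝ × ℝ)) :=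
  {p | p.2.1 ^ 2 + p.2.2 ^ 2 = 2 * E ∧
    p.2.2 + Real.cos (2 * π * p.1.1) = F ∧ p.2.1 < 0}

lemma sign_const_of_ne_zero (g : ℝ → ℝ) (hc : Continuous g) (hne : ∀ t, g t ≠ 0) :
    (0 < g 0 → ∀ t, 0 < g t) ∧ (g 0 < 0 → ∀ t, g t < 0) := by
  have key : 0 < g 0 → ∀ t, 0 < g t := by
    intro h0 t
    by_contra h
    push_neg at h
    have ht : g t < 0 := lt_of_le_of_ne h (hne t)
    have : (0:ℝ) ∈ Set.uIcc (g 0) (g t) := by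
      rw [Set.mem_uIcc]; right; exact ⟨ht.le, h0.le⟩
    obtain ⟨s, _, hs⟩ := intermediate_value_uIcc (hc.continuousOn (s := Set.uIcc 0 t)) this
    exact hne s hs
  refine ⟨key, ?_⟩
  intro h0 t
  by_contra h
  push_neg at h
  have ht : 0 < g t := lt_of_le_of_ne h (Ne.symm (hne t))
  have : (0:ℝ) ∈ Set.uIcc (g 0) (g t) := by
    rw [Set.mem_uIcc]; left; exact ⟨h0.le, ht.le⟩
  obtain ⟨s, _, hs⟩ := intermediate_value_uIcc (hc.continuousOn (s := Set.uIcc 0 t)) this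
  exact hne s hs

/-- For `E > 1/2` and `|F| < √(2E) − 1`, the sets `Γ⁺` and `Γ⁻` are invariant under
the Euler–Lagrange flow of the vertical magnetic Lagrangian. -/
theorem GammaPlus_GammaMinus_invariant (E F : ℝ) (hE : 1 / 2 < E)
    (hF : |F| < Real.sqrt (2 * E) - 1) (x v : ℝ → ℝ × ℝ)
    (hsol : IsELSolution Set.univ x v) :
    ((x 0, v 0) ∈ GammaPlus E F → ∀ t : ℝ, (x t, v t) ∈ GammaPlus E F) ∧
    ((x 0, v 0) ∈ GammaMinus E F → ∀ t : ℝ, (x t, v t) ∈ GammaMinus E F) := by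
  have hx : ∀ t, HasDerivAt x (v t) t :=
    fun t => hasDerivWithinAt_univ.mp (hsol t trivial).1
  have hv1 : ∀ t, HasDerivAt (fun s => (v s).1)
      (-(2 * π * Real.sin (2 * π * (x t).1) * (v t).2)) t :=
    fun t => hasDerivWithinAt_univ.mp (hsol t trivial).2.1
  have hv2 : ∀ t, HasDerivAt (fun s => (v s).2)
      (2 * π * Real.sin (2 * π * (x t).1) * (v t).1) t :=
    fun t => hasDerivWithinAt_univ.mp (hsol t trivial).2.2
  have hx1 : ∀ t, HasDerivAt (fun s => (x s).1) ((v t).1) t := by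
    intro t
    have := ((ContinuousLinearMap.fst ℝ ℝ ℝ).hasFDerivAt.comp t (hx t).hasFDerivAt).hasDerivAt
    simpa using! this
  -- energy is conserved
  have hEn : ∀ t, HasDerivAt (fun s => (v s).1 ^ 2 + (v s).2 ^ 2) 0 t := by
    intro t
    have h := ((hv1 t).fun_pow 2).fun_add ((hv2 t).fun_pow 2)
    convert h using 1
    · rfl
    · rfl
    ring
  have hEc : ∀ t, (v t).1 ^ 2 + (v t).2 ^ 2 = (v 0).1 ^ 2 + (v 0).2 ^ 2 := by
    intro t
    exact is_const_of_deriv_eq_zero (fun s => (hEn s).differentiableAt)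
      (fun s => (hEn s).deriv) t 0
  -- F is conserved
  have hFn : ∀ t, HasDerivAt (fun s => (v s).2 + Real.cos (2 * π * (x s).1)) 0 t := by
    intro t
    have hc : HasDerivAt (fun s => Real.cos (2 * π * (x s).1))
        (-Real.sin (2 * π * (x t).1) * (2 * π * (v t).1)) t :=
      ((hx1 t).const_mul (2 * π)).cos
    have h := (hv2 t).fun_add hc
    convert h using 1
    · rfl
    · rfl
    ring
  have hFc : ∀ t, (v t).2 + Real.cos (2 * π * (x t).1)
      = (v 0).2 + Real.cos (2 * π * (x 0).1) := by
    intro t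
    exact is_const_of_deriv_eq_zero (fun s => (hFn s).differentiableAt)
      (fun s => (hFn s).deriv) t 0
  have hcont : Continuous fun s => (v s).1 := by
    have : Differentiable ℝ fun s => (v s).1 := fun s => (hv1 s).differentiableAt
    exact this.continuous
  -- main argument given initial conditions on levels
  have main : (v 0).1 ^ 2 + (v 0).2 ^ 2 = 2 * E →
      (v 0).2 + Real.cos (2 * π * (x 0).1) = F → ∀ t, (v t).1 ≠ 0 := by
    intro hE0 hF0 t
    have h2E : (0:ℝ) < 2 * E := by linarith
    have hsq : Real.sqrt (2 * E) ^ 2 = 2 * E := Real.sq_sqrt h2E.le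
    have hFt : (v t).2 + Real.cos (2 * π * (x t).1) = F := by rw [hFc t, hF0]
    have hEt : (v t).1 ^ 2 + (v t).2 ^ 2 = 2 * E := by rw [hEc t, hE0]
    have hbd : |(v t).2| < Real.sqrt (2 * E) := by
      have : |(v t).2| ≤ |F| + |Real.cos (2 * π * (x t).1)| := by
        have : (v t).2 = F - Real.cos (2 * π * (x t).1) := by linarith
        rw [this]
        exact abs_sub _ _
      have hcos := Real.abs_cos_le_one (2 * π * (x t).1)
      linarith
    have hsq2 : (v t).2 ^ 2 < 2 * E := by
      have h := abs_lt.mp hbd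
      have := sq_lt_sq' h.1 h.2
      linarith
    intro h0
    rw [h0] at hEt
    nlinarith
  constructor
  · rintro ⟨hE0, hF0, hv0⟩ t
    have hne := main hE0 hF0
    have hpos := (sign_const_of_ne_zero (fun s => (v s).1) hcont hne).1 hv0 t
    exact ⟨by rw [hEc t, hE0], by rw [hFc t, hF0], hpos⟩
  · rintro ⟨hE0, hF0, hv0⟩ t
    have hne := main hE0 hF0
    have hneg := (sign_const_of_ne_zero (fun s => (v s).1) hcont hne).2 hv0 t
    exact ⟨by rw [hEc t, hE0], by rw [hFc t, hF0], hneg⟩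
end
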